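/- arXiv:0910.3713 — 5 statements merged into one kernel-verified Lean document; each statement's English description precedes it below -/
import Mathlib

section
/- In the quantum generator constructed for noisy parity, starting from the basis state (0,0,0), for every time t the post-measurement state |ψ_t⟩ equals ρ·e_{(j,k,ℓ)} for some basis vector e_{(j,k,ℓ)} and some ρ ∈ ℂ with |ρ| = 1. -/
open Classical in
/-- The unitary of the noisy-parity quantum generator. -/
noncomputable def qgU (n : ℕ) (S : Finset ℕ) (η : ℝ) :
    Matrix (Fin (n + 1) × Bool × Bool) (Fin (n + 1) × Bool × Bool) ℂ :=
  fun r c =>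
    let j : Fin (n + 1) := c.1
    let k : Bool := c.2.1
    let l : Bool := c.2.2
    if (j : ℕ) < n then
      if (j : ℕ) + 1 ∉ S then
        if r = (j + 1, k, l) then ((Real.sqrt 2 : ℝ) : ℂ)⁻¹
        else if r = (j + 1, k, !l) then Complex.I * ((Real.sqrt 2 : ℝ) : ℂ)⁻¹
        else 0
      else if (j : ℕ) + 1 = sInf (S : Set ℕ) then
        if r = (j + 1, k, l) then ((Real.sqrt 2 : ℝ) : ℂ)⁻¹
        else if r = (j + 1, !k, l) then Complex.I * ((Real.sqrt 2 : ℝ) : ℂ)⁻¹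
        else 0
      else
        if r = (j + 1, xor k l, k) then ((Real.sqrt 2 : ℝ) : ℂ)⁻¹
        else if r = (j + 1, !(xor k l), k) then Complex.I * ((Real.sqrt 2 : ℝ) : ℂ)⁻¹
        else 0
    else
      if r = (j + 1, k, l) then ((Real.sqrt (1 - η) : ℝ) : ℂ)
      else if r = (j + 1, !k, l) then Complex.I * ((Real.sqrt η : ℝ) : ℂ)
      else 0

open Classical in
/-- The measurement partition of the basis states into the two outcome classes:
for `j ∉ {0} ∪ S`, state `(j,k,b)` has outcome `b`; for `j ∈ S \ {min S}`,
state `(j, ℓ⊕b, ℓ)` has outcome `b`; otherwise `(j,b,ℓ)` has outcome `b`. -/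
noncomputable def qgMeas (n : ℕ) (S : Finset ℕ) : Fin (n + 1) × Bool × Bool → Bool :=
  fun p =>
    let j : Fin (n + 1) := p.1
    let k : Bool := p.2.1
    let l : Bool := p.2.2
    if (j : ℕ) ≠ 0 ∧ (j : ℕ) ∉ S then l
    else if (j : ℕ) ∈ S ∧ (j : ℕ) ≠ sInf (S : Set ℕ) then xor k l
    else k

open Classical in
/-- The projection onto the span of basis states with measurement outcome `o`. -/
noncomputable def qgProj (n : ℕ) (S : Finset ℕ) (o : Bool)
    (v : Fin (n + 1) × Bool × Bool → ℂ) : Fin (n + 1) × Bool × Bool → ℂ :=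
  fun i => if qgMeas n S i = o then v i else 0

open Classical in
lemma qg_col (n : ℕ) (S : Finset ℕ) (hSsub : S ⊆ Finset.Icc 1 n) (η : ℝ)
    (hη : 0 < η) (hη' : η < 1 / 2) (i₀ : Fin (n + 1) × Bool × Bool) :
    ∃ (r₁ r₂ : Fin (n + 1) × Bool × Bool) (a b : ℂ), a ≠ 0 ∧ b ≠ 0 ∧
      qgMeas n S r₁ ≠ qgMeas n S r₂ ∧
      (fun r => qgU n S η r i₀) = fun r => if r = r₁ then a else if r = r₂ then b else 0 := by
  obtain ⟨j, k, l⟩ := i₀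
  have ha2 : (((Real.sqrt 2 : ℝ) : ℂ))⁻¹ ≠ 0 := by
    simp [Real.sqrt_eq_zero']
  by_cases hjn : (j : ℕ) < n
  · have hval : ((j + 1 : Fin (n + 1)) : ℕ) = (j : ℕ) + 1 := by
      rw [Fin.val_add_one_of_lt]
      exact Fin.lt_last_iff_ne_last.mpr (by
        intro h; subst h; simp [Fin.last] at hjn)
    have hne0 : ((j + 1 : Fin (n + 1)) : ℕ) ≠ 0 := by omega
    by_cases hmem : (j : ℕ) + 1 ∉ S
    · refine ⟨(j + 1, k, l), (j + 1, k, !l), _, _, ha2, mul_ne_zero Complex.I_ne_zero ha2, ?_, ?_⟩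
      · simp [qgMeas, hval, hmem, hne0]
      · funext r; simp [qgU, hjn, hmem]
    · push_neg at hmem
      by_cases hinf : (j : ℕ) + 1 = sInf (S : Set ℕ)
      · have hsmem : sInf ((S : Set ℕ)) ∈ S := hinf ▸ hmem
        refine ⟨(j + 1, k, l), (j + 1, !k, l), _, _, ha2, mul_ne_zero Complex.I_ne_zero ha2, ?_, ?_⟩
        · simp [qgMeas, hval, hmem, hinf, hsmem]
        · funext r; simp [qgU, hjn, hmem, hinf, hsmem]
      · refine ⟨(j + 1, xor k l, k), (j + 1, !(xor k l), k), _, _, ha2,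
          mul_ne_zero Complex.I_ne_zero ha2, ?_, ?_⟩
        · simp [qgMeas, hval, hmem, hinf]
        · funext r; simp [qgU, hjn, hmem, hinf]
  · have hj : j = Fin.last n := by
      have := j.isLt; apply Fin.ext; simp [Fin.last]; omega
    have hval : ((j + 1 : Fin (n + 1)) : ℕ) = 0 := by
      subst hj; simp
    have h0S : (0 : ℕ) ∉ S := fun h => by simpa using (hSsub h)
    refine ⟨(j + 1, k, l), (j + 1, !k, l), ((Real.sqrt (1 - η) : ℝ) : ℂ),
      Complex.I * ((Real.sqrt η : ℝ) : ℂ), ?_, ?_, ?_, ?_⟩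
    · simp [Real.sqrt_eq_zero']; linarith
    · refine mul_ne_zero Complex.I_ne_zero ?_
      simp [Real.sqrt_eq_zero']; linarith
    · simp [qgMeas, hval, h0S]
    · funext r; simp [qgU, hjn]

lemma bool3 (x y z : Bool) (h1 : x ≠ y) (h2 : z ≠ x) : y = z := by
  cases x <;> cases y <;> cases z <;> simp_all

open Classical in
/-- In the noisy-parity quantum generator started at basis state `(0,0,0)`, every
post-measurement state `ψ_t` is of the form `ρ · e_{(j,k,ℓ)}` with `|ρ| = 1`. -/
theorem stmt10 (n : ℕ) (hn : 1 ≤ n) (S : Finset ℕ) (hS : S.Nonempty)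
    (hSsub : S ⊆ Finset.Icc 1 n) (η : ℝ) (hη : 0 < η) (hη' : η < 1 / 2)
    (x : ℕ → Bool) (ψ : ℕ → (Fin (n + 1) × Bool × Bool → ℂ))
    (hψ0 : ψ 0 = fun i => if i = (0, false, false) then 1 else 0)
    (hnz : ∀ t, qgProj n S (x (t + 1)) ((qgU n S η).mulVec (ψ t)) ≠ 0)
    (hstep : ∀ t, ψ (t + 1) =
      ((Real.sqrt (∑ i, Complex.normSq
        (qgProj n S (x (t + 1)) ((qgU n S η).mulVec (ψ t)) i)) : ℝ) : ℂ)⁻¹ •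
        qgProj n S (x (t + 1)) ((qgU n S η).mulVec (ψ t))) :
    ∀ t, ∃ (ρ : ℂ) (i₀ : Fin (n + 1) × Bool × Bool), ‖ρ‖ = 1 ∧
      ψ t = fun i => if i = i₀ then ρ else 0 := by
  intro t
  induction t with
  | zero => exact ⟨1, (0, false, false), by simp, hψ0⟩
  | succ t ih =>
    obtain ⟨ρ, i₀, hρ, hψ⟩ := ih
    obtain ⟨r₁, r₂, a, b, ha, hb, hmeas, hcol⟩ := qg_col n S hSsub η hη hη' i₀
    have hρ0 : ρ ≠ 0 := by intro h; simp [h] at hρ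
    have hm : (qgU n S η).mulVec (ψ t) =
        fun r => if r = r₁ then ρ * a else if r = r₂ then ρ * b else 0 := by
      funext r
      have h1 : (qgU n S η).mulVec (ψ t) r = ρ * qgU n S η r i₀ := by
        rw [hψ]
        simp [Matrix.mulVec, dotProduct, mul_ite, mul_zero, mul_comm]
      rw [h1, congrFun hcol r]
      split_ifs <;> simp
    set o := x (t + 1) with ho_def
    have key : ∃ (rs : Fin (n + 1) × Bool × Bool) (c : ℂ), c ≠ 0 ∧
        qgProj n S o ((qgU n S η).mulVec (ψ t)) =
          fun i => if i = rs then ρ * c else 0 := by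
      by_cases ho : qgMeas n S r₁ = o
      · refine ⟨r₁, a, ha, ?_⟩
        funext i
        simp only [qgProj, hm]
        by_cases h1 : i = r₁
        · subst h1; simp [ho]
        · by_cases h2 : i = r₂
          · have hmo : qgMeas n S i ≠ o := by
              rw [h2]; exact fun h => hmeas (ho.trans h.symm)
            simp [h1, hmo]
          · simp [h1, h2]
      · have ho2 : qgMeas n S r₂ = o := bool3 _ _ _ hmeas (Ne.symm ho)
        refine ⟨r₂, b, hb, ?_⟩
        funext i
        simp only [qgProj, hm]
        by_cases h2 : i = r₂
        · have hmo : qgMeas n S i = o := by rw [h2]; exact ho2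
          have h1 : ¬ i = r₁ := by
            rw [h2]; exact fun h => hmeas (congrArg _ h.symm)
          have h1' : ¬ r₂ = r₁ := fun h => hmeas (congrArg _ h.symm)
          simp [ho2, h1', h2]
        · by_cases h1 : i = r₁
          · subst h1; simp [ho, h2]
          · simp [h1, h2]
    obtain ⟨rs, c, hc, hp⟩ := key
    have hrc : ρ * c ≠ 0 := mul_ne_zero hρ0 hc
    have habs : (0 : ℝ) < ‖ρ * c‖ := by
      simpa using norm_pos_iff.mpr hrc
    refine ⟨((‖ρ * c‖ : ℝ) : ℂ)⁻¹ * (ρ * c), rs, ?_, ?_⟩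
    · rw [norm_mul, norm_inv, Complex.norm_real, norm_norm,
        inv_mul_cancel₀ (ne_of_gt habs)]
    · rw [hstep t, ← ho_def, hp]
      have hsum2 : (∑ i : Fin (n + 1) × Bool × Bool,
          Complex.normSq ((fun i => if i = rs then ρ * c else 0) i)) =
          Complex.normSq (ρ * c) := by
        simp [apply_ite Complex.normSq, Finset.sum_ite_eq, Finset.sum_ite_eq']
      rw [hsum2, show Real.sqrt (Complex.normSq (ρ * c)) = ‖ρ * c‖ from
        (Complex.norm_def _).symm]
      funext i
      simp only [Pi.smul_apply, smul_eq_mul]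
      split_ifs <;> simp
end

section
/- Let P_S be the noisy parity distribution on {0,1}^{n+1} with noise rate η ∈ (0,1/2), and let E be a probability distribution on {0,1}^{n+1} with full support. If the fraction of x ∈ {0,1}^n with E(x, f_S(x)) ≤ E(x, ¬f_S(x)) exceeds ε, then KL(P_S||E) > ε·(1 − H(η)). -/
lemma one_sub_le_log (t : ℝ) (ht : 0 < t) : 1 - 1/t ≤ Real.log t := by
  have h := Real.log_le_sub_one_of_pos (show (0:ℝ) < 1/t by positivity)
  rw [one_div, Real.log_inv] at h
  rw [one_div]
  linarith

lemma one_sub_lt_log (t : ℝ) (ht : 0 < t) (ht1 : t ≠ 1) : 1 - 1/t < Real.log t := by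
  have hne : t⁻¹ ≠ 1 := by rwa [ne_eq, inv_eq_one]
  have h := Real.log_lt_sub_one_of_pos (show (0:ℝ) < t⁻¹ by positivity) hne
  rw [Real.log_inv] at h
  rw [one_div]
  linarith

lemma logsum (p q a b : ℝ) (hp : 0 < p) (hq : 0 < q) (ha : 0 < a) (hb : 0 < b) :
    (p+q) * Real.log ((p+q)/(a+b)) ≤ p * Real.log (p/a) + q * Real.log (q/b) := by
  set r : ℝ := (p+q)/(a+b) with hr
  have hrpos : 0 < r := by positivity
  have h1 := one_sub_le_log ((p/a)/r) (by positivity)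
  have h2 := one_sub_le_log ((q/b)/r) (by positivity)
  rw [Real.log_div (by positivity) hrpos.ne'] at h1 h2
  have e1 : 1/((p/a)/r) = a*r/p := by field_simp
  have e2 : 1/((q/b)/r) = b*r/q := by field_simp
  rw [e1] at h1; rw [e2] at h2
  have m1 := mul_le_mul_of_nonneg_left h1 hp.le
  have m2 := mul_le_mul_of_nonneg_left h2 hq.le
  have c1 : p * (1 - a*r/p) = p - a*r := by field_simp
  have c2 : q * (1 - b*r/q) = q - b*r := by field_simp
  rw [c1] at m1; rw [c2] at m2
  have hsum : (a+b)*r = p+q := by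
    rw [hr]; field_simp
  nlinarith [m1, m2]

lemma badbound (p q a b : ℝ) (hp : 0 < p) (hq : 0 < q) (ha : 0 < a) (hb : 0 < b)
    (hab : a ≤ b) (hpq : q ≤ p) :
    p * Real.log (2*p/(a+b)) + q * Real.log (2*q/(a+b))
      ≤ p * Real.log (p/a) + q * Real.log (q/b) := by
  have hc : 0 < a + b := by linarith
  have h1 := one_sub_le_log ((a+b)/(2*a)) (by positivity)
  have h2 := one_sub_le_log ((a+b)/(2*b)) (by positivity)
  have e1 : Real.log (p/a) = Real.log (2*p/(a+b)) + Real.log ((a+b)/(2*a)) := by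
    rw [← Real.log_mul (by positivity) (by positivity)]
    congr 1
    field_simp
  have e2 : Real.log (q/b) = Real.log (2*q/(a+b)) + Real.log ((a+b)/(2*b)) := by
    rw [← Real.log_mul (by positivity) (by positivity)]
    congr 1
    field_simp
  rw [e1, e2]
  have f1 : 1/((a+b)/(2*a)) = 2*a/(a+b) := by field_simp
  have f2 : 1/((a+b)/(2*b)) = 2*b/(a+b) := by field_simp
  rw [f1] at h1; rw [f2] at h2
  have m1 := mul_le_mul_of_nonneg_left h1 hp.le
  have m2 := mul_le_mul_of_nonneg_left h2 hq.le
  have key : p * (2*a/(a+b)) + q * (2*b/(a+b)) ≤ p + q := by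
    have : p * (2*a/(a+b)) + q * (2*b/(a+b)) = (2*(p*a) + 2*(q*b))/(a+b) := by
      field_simp
    rw [this, div_le_iff₀ hc]
    nlinarith [mul_nonneg (sub_nonneg.2 hpq) (sub_nonneg.2 hab)]
  nlinarith [m1, m2]

lemma ent_lt_log2 (η : ℝ) (hη : 0 < η) (hη' : η < 1/2) :
    -(η * Real.log η) - (1-η) * Real.log (1-η) < Real.log 2 := by
  have h1η : 0 < 1 - η := by linarith
  have h1 := one_sub_lt_log (2*η) (by positivity) (by intro h; nlinarith)
  have h2 := one_sub_le_log (2*(1-η)) (by positivity)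
  rw [Real.log_mul (by norm_num) hη.ne'] at h1
  rw [Real.log_mul (by norm_num) h1η.ne'] at h2
  have m1 := mul_lt_mul_of_pos_left h1 hη
  have m2 := mul_le_mul_of_nonneg_left h2 h1η.le
  have c1 : η * (1 - 1/(2*η)) = η - 1/2 := by field_simp
  have c2 : (1-η) * (1 - 1/(2*(1-η))) = (1-η) - 1/2 := by field_simp
  rw [c1] at m1; rw [c2] at m2
  nlinarith [m1, m2]

lemma perx (η u a b : ℝ) (hη : 0 < η) (hη' : η < 1/2) (hu : 0 < u) (ha : 0 < a) (hb : 0 < b) :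
    u * (Real.log u - Real.log (a+b))
      + (if a ≤ b then u * (Real.log 2 - (-(η * Real.log η) - (1-η) * Real.log (1-η))) else 0)
      ≤ ((1-η)*u) * Real.log ((1-η)*u/a) + (η*u) * Real.log (η*u/b) := by
  have h1η : 0 < 1 - η := by linarith
  have hc : 0 < a + b := by linarith
  by_cases hab : a ≤ b
  · rw [if_pos hab]
    have hbb := badbound ((1-η)*u) (η*u) a b (by positivity) (by positivity) ha hb hab
      (by nlinarith)
    refine le_trans (le_of_eq ?_) hbb
    have l1 : Real.log (2*((1-η)*u)/(a+b))
        = Real.log 2 + (Real.log (1-η) + Real.log u) - Real.log (a+b) := by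
      rw [Real.log_div (by positivity) hc.ne', Real.log_mul (by norm_num) (by positivity),
        Real.log_mul h1η.ne' hu.ne']
    have l2 : Real.log (2*(η*u)/(a+b))
        = Real.log 2 + (Real.log η + Real.log u) - Real.log (a+b) := by
      rw [Real.log_div (by positivity) hc.ne', Real.log_mul (by norm_num) (by positivity),
        Real.log_mul hη.ne' hu.ne']
    rw [l1, l2]; ring
  · rw [if_neg hab, add_zero]
    have hls := logsum ((1-η)*u) (η*u) a b (by positivity) (by positivity) ha hb
    rw [show (1-η)*u + η*u = u from by ring, Real.log_div hu.ne' hc.ne'] at hls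
    exact hls


/-- If `P_S` is the noisy parity distribution on `{0,1}^{n+1}` with noise rate `η ∈ (0,1/2)`
and `E` is a full-support distribution such that the fraction of `x` with
`E(x, f_S(x)) ≤ E(x, ¬f_S(x))` exceeds `ε`, then `KL(P_S‖E) > ε·(1 - H(η))` (base-2 logs). -/
theorem stmt14 (n : ℕ) (S : Finset (Fin n)) (η ε : ℝ) (hη : 0 < η) (hη' : η < 1 / 2)
    (hε : 0 ≤ ε)
    (fS : (Fin n → Bool) → Bool)
    (hfS : ∀ x, fS x = decide (Odd ((S.filter fun i => x i = true).card)))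
    (PS : ((Fin n → Bool) × Bool) → ℝ)
    (hPS : ∀ ω, PS ω = if ω.2 = fS ω.1 then (1 - η) / 2 ^ n else η / 2 ^ n)
    (E : ((Fin n → Bool) × Bool) → ℝ) (hEpos : ∀ ω, 0 < E ω) (hEsum : ∑ ω, E ω = 1)
    (hbad : ε < ((Finset.univ.filter
      fun x : Fin n → Bool => E (x, fS x) ≤ E (x, !(fS x))).card : ℝ) / 2 ^ n) :
    ε * (1 - (-(η * Real.logb 2 η) - (1 - η) * Real.logb 2 (1 - η))) <
      ∑ ω, PS ω * Real.logb 2 (PS ω / E ω) := by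
  have h1η : 0 < 1 - η := by linarith
  set u : ℝ := 1/2^n with hu_def
  have hu : (0:ℝ) < u := by positivity
  have hL : (0:ℝ) < Real.log 2 := Real.log_pos (by norm_num)
  -- grouping
  have hgroup : ∀ g : ((Fin n → Bool) × Bool) → ℝ,
      ∑ ω, g ω = ∑ x : Fin n → Bool, (g (x, fS x) + g (x, !(fS x))) := by
    intro g
    rw [Fintype.sum_prod_type]
    refine Finset.sum_congr rfl fun x _ => ?_
    rw [Fintype.sum_bool]
    cases h : fS x <;> simp [h, add_comm]
  have hEsum' : ∑ x : Fin n → Bool, (E (x, fS x) + E (x, !(fS x))) = 1 := by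
    rw [← hgroup]; exact hEsum
  have hX : ∑ ω, PS ω * Real.log (PS ω / E ω)
      = ∑ x : Fin n → Bool, (((1-η)*u) * Real.log (((1-η)*u)/E (x, fS x))
          + (η*u) * Real.log ((η*u)/E (x, !(fS x)))) := by
    rw [hgroup fun ω => PS ω * Real.log (PS ω / E ω)]
    refine Finset.sum_congr rfl fun x _ => ?_
    rw [hPS (x, fS x), hPS (x, !(fS x))]
    have eu1 : (1 - η)/(2:ℝ)^n = (1-η)*u := by rw [hu_def, mul_one_div]
    have eu2 : η/(2:ℝ)^n = η*u := by rw [hu_def, mul_one_div]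
    rw [if_pos rfl, if_neg (Bool.not_ne_self _), eu1, eu2]
  -- per-x lower bound
  have key : ∀ x : Fin n → Bool,
      u * (Real.log u - Real.log (E (x, fS x) + E (x, !(fS x))))
        + (if E (x, fS x) ≤ E (x, !(fS x)) then
            u * (Real.log 2 - (-(η * Real.log η) - (1-η) * Real.log (1-η))) else 0)
      ≤ ((1-η)*u) * Real.log (((1-η)*u)/E (x, fS x))
          + (η*u) * Real.log ((η*u)/E (x, !(fS x))) :=
    fun x => perx η u _ _ hη hη' hu (hEpos _) (hEpos _)
  have hsumB := Finset.sum_le_sum (fun x (_ : x ∈ Finset.univ) => key x)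
  rw [Finset.sum_add_distrib] at hsumB
  -- part 1 is nonnegative
  have hpart1 : (0:ℝ) ≤ ∑ x : Fin n → Bool,
      u * (Real.log u - Real.log (E (x, fS x) + E (x, !(fS x)))) := by
    have hper : ∀ x : Fin n → Bool, u - (E (x, fS x) + E (x, !(fS x)))
        ≤ u * (Real.log u - Real.log (E (x, fS x) + E (x, !(fS x)))) := by
      intro x
      have ha := hEpos (x, fS x)
      have hb := hEpos (x, !(fS x))
      have hcx : 0 < E (x, fS x) + E (x, !(fS x)) := by linarith
      have h := one_sub_le_log (u/(E (x, fS x) + E (x, !(fS x)))) (by positivity)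
      rw [Real.log_div hu.ne' hcx.ne', one_div_div] at h
      have m := mul_le_mul_of_nonneg_left h hu.le
      have c : u * (1 - (E (x, fS x) + E (x, !(fS x)))/u)
          = u - (E (x, fS x) + E (x, !(fS x))) := by field_simp
      rw [c] at m; exact m
    have hsum := Finset.sum_le_sum (fun x (_ : x ∈ Finset.univ) => hper x)
    rw [Finset.sum_sub_distrib, hEsum', Finset.sum_const, Finset.card_univ,
      nsmul_eq_mul] at hsum
    have hcard : (Fintype.card (Fin n → Bool) : ℝ) = 2^n := by
      simp [Fintype.card_fun]
    rw [hcard] at hsum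
    have : (2:ℝ)^n * u - 1 = 0 := by rw [hu_def]; field_simp; norm_num
    linarith
  -- part 2 is the count of bad x
  have hpart2 : ∑ x : Fin n → Bool, (if E (x, fS x) ≤ E (x, !(fS x)) then
        u * (Real.log 2 - (-(η * Real.log η) - (1-η) * Real.log (1-η))) else 0)
      = ((Finset.univ.filter
          fun x : Fin n → Bool => E (x, fS x) ≤ E (x, !(fS x))).card : ℝ)
        * (u * (Real.log 2 - (-(η * Real.log η) - (1-η) * Real.log (1-η)))) := by
    rw [← Finset.sum_filter, Finset.sum_const, nsmul_eq_mul]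
  rw [hpart2] at hsumB
  have hHlt := ent_lt_log2 η hη hη'
  set B : ℝ := ((Finset.univ.filter
      fun x : Fin n → Bool => E (x, fS x) ≤ E (x, !(fS x))).card : ℝ) with hB_def
  have hεB : ε < B * u := by
    have : B / 2^n = B * u := by rw [hu_def, mul_one_div]
    rw [← this]; exact hbad
  -- convert goal from logb to log
  simp only [Real.logb]
  have hdiv : ∑ ω, PS ω * (Real.log (PS ω / E ω) / Real.log 2)
      = (∑ ω, PS ω * Real.log (PS ω / E ω)) / Real.log 2 := by
    rw [Finset.sum_div]
    exact Finset.sum_congr rfl fun ω _ => (mul_div_assoc _ _ _).symm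
  rw [hdiv, lt_div_iff₀ hL]
  have hgoal_eq : ε * (1 - (-(η * (Real.log η / Real.log 2))
        - (1 - η) * (Real.log (1-η) / Real.log 2))) * Real.log 2
      = ε * (Real.log 2 - (-(η * Real.log η) - (1-η) * Real.log (1-η))) := by
    field_simp
  rw [hgoal_eq]
  have h5 : ε * (Real.log 2 - (-(η * Real.log η) - (1-η) * Real.log (1-η)))
      < (B * u) * (Real.log 2 - (-(η * Real.log η) - (1-η) * Real.log (1-η))) :=
    mul_lt_mul_of_pos_right hεB (by linarith)
  have hassoc : (B * u) * (Real.log 2 - (-(η * Real.log η) - (1-η) * Real.log (1-η)))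
      = B * (u * (Real.log 2 - (-(η * Real.log η) - (1-η) * Real.log (1-η)))) := by ring
  rw [hX]
  linarith [hsumB, hpart1, h5, hassoc.le, hassoc.ge]
end

section
/- Let P_S be the noisy parity distribution with η ∈ (0,1/2) and E a full-support distribution on {0,1}^{n+1} with KL(P_S||E) ≤ ε·(1−H(η)). Define the predictor E'(x) = argmax_b E(x,b) (ties broken to ¬f_S(x)). Then Pr_{x uniform in {0,1}^n}[E'(x) ≠ f_S(x)] ≤ ε. -/
open Real Finset

private lemma log2pos : (0:ℝ) < Real.log 2 := Real.log_pos one_lt_two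

private lemma logb2_le {t : ℝ} (ht : 0 < t) : Real.logb 2 t ≤ (t - 1) / Real.log 2 := by
  rw [Real.logb, div_le_div_iff_of_pos_right log2pos]
  exact Real.log_le_sub_one_of_pos ht

/-- Gibbs' inequality for two points. -/
private lemma two_point {p q a b : ℝ} (hp : 0 < p) (hq : 0 < q) (ha : 0 < a) (hb : 0 < b)
    (h : a + b ≤ p + q) : 0 ≤ p * Real.logb 2 (p / a) + q * Real.logb 2 (q / b) := by
  have h1 := logb2_le (div_pos ha hp)
  have h2 := logb2_le (div_pos hb hq)
  have e1 : Real.logb 2 (p / a) = - Real.logb 2 (a / p) := by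
    rw [← Real.logb_inv, inv_div]
  have e2 : Real.logb 2 (q / b) = - Real.logb 2 (b / q) := by
    rw [← Real.logb_inv, inv_div]
  rw [e1, e2]
  have key : p * Real.logb 2 (a / p) + q * Real.logb 2 (b / q) ≤ 0 := by
    have c1 : p * Real.logb 2 (a / p) ≤ p * ((a / p - 1) / Real.log 2) :=
      mul_le_mul_of_nonneg_left h1 hp.le
    have c2 : q * Real.logb 2 (b / q) ≤ q * ((b / q - 1) / Real.log 2) :=
      mul_le_mul_of_nonneg_left h2 hq.le
    have e3 : p * ((a / p - 1) / Real.log 2) + q * ((b / q - 1) / Real.log 2)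
        = (a + b - (p + q)) / Real.log 2 := by
      field_simp
      ring
    have : (a + b - (p + q)) / Real.log 2 ≤ 0 :=
      div_nonpos_of_nonpos_of_nonneg (by linarith) log2pos.le
    linarith
  linarith

/-- Gibbs' inequality for finite sums. -/
private lemma gibbs_sum {α : Type*} (s : Finset α) (p a : α → ℝ)
    (hp : ∀ i ∈ s, 0 < p i) (ha : ∀ i ∈ s, 0 < a i)
    (h : ∑ i ∈ s, a i ≤ ∑ i ∈ s, p i) :
    0 ≤ ∑ i ∈ s, p i * Real.logb 2 (p i / a i) := by
  have key : ∑ i ∈ s, p i * Real.logb 2 (a i / p i) ≤ 0 := by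
    have step : ∀ i ∈ s, p i * Real.logb 2 (a i / p i)
        ≤ p i * ((a i / p i - 1) / Real.log 2) := fun i hi =>
      mul_le_mul_of_nonneg_left (logb2_le (div_pos (ha i hi) (hp i hi))) (hp i hi).le
    have e3 : ∑ i ∈ s, p i * ((a i / p i - 1) / Real.log 2)
        = (∑ i ∈ s, a i - ∑ i ∈ s, p i) / Real.log 2 := by
      have : ∀ i ∈ s, p i * ((a i / p i - 1) / Real.log 2) = (a i - p i) / Real.log 2 := by
        intro i hi
        field_simp [(hp i hi).ne']
      rw [Finset.sum_congr rfl this, ← Finset.sum_div, Finset.sum_sub_distrib, sub_div]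
    have h4 : (∑ i ∈ s, a i - ∑ i ∈ s, p i) / Real.log 2 ≤ 0 :=
      div_nonpos_of_nonpos_of_nonneg (by linarith) log2pos.le
    calc ∑ i ∈ s, p i * Real.logb 2 (a i / p i)
        ≤ ∑ i ∈ s, p i * ((a i / p i - 1) / Real.log 2) := Finset.sum_le_sum step
      _ = (∑ i ∈ s, a i - ∑ i ∈ s, p i) / Real.log 2 := e3
      _ ≤ 0 := h4
  have e : ∀ i ∈ s, p i * Real.logb 2 (p i / a i) = -(p i * Real.logb 2 (a i / p i)) := by
    intro i hi
    rw [show p i / a i = (a i / p i)⁻¹ from (inv_div _ _).symm, Real.logb_inv]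
    ring
  rw [Finset.sum_congr rfl e, Finset.sum_neg_distrib]
  linarith

set_option maxHeartbeats 1000000 in
/-- If `E` is a full-support distribution with `KL(P_S‖E) ≤ ε·(1-H(η))` (base-2 logs), then
the predictor `E'(x) = argmax_b E(x,b)` (ties broken to `¬f_S(x)`) errs on at most an `ε`
fraction of the `x ∈ {0,1}^n`. -/
theorem stmt15 (n : ℕ) (S : Finset (Fin n)) (η ε : ℝ) (hη : 0 < η) (hη' : η < 1 / 2)
    (hε : 0 ≤ ε)
    (fS : (Fin n → Bool) → Bool)
    (hfS : ∀ x, fS x = decide (Odd ((S.filter fun i => x i = true).card)))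
    (PS : ((Fin n → Bool) × Bool) → ℝ)
    (hPS : ∀ ω, PS ω = if ω.2 = fS ω.1 then (1 - η) / 2 ^ n else η / 2 ^ n)
    (E : ((Fin n → Bool) × Bool) → ℝ) (hEpos : ∀ ω, 0 < E ω) (hEsum : ∑ ω, E ω = 1)
    (hKL : ∑ ω, PS ω * Real.logb 2 (PS ω / E ω) ≤
      ε * (1 - (-(η * Real.logb 2 η) - (1 - η) * Real.logb 2 (1 - η))))
    (E' : (Fin n → Bool) → Bool)
    (hE' : ∀ x, E' x = if E (x, fS x) ≤ E (x, !(fS x)) then !(fS x) else fS x) :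
    ((Finset.univ.filter fun x : Fin n → Bool => E' x ≠ fS x).card : ℝ) / 2 ^ n ≤ ε := by
  have hη1 : (0:ℝ) < 1 - η := by linarith
  set N : ℝ := 2 ^ n with hNdef
  have hN : (0:ℝ) < N := by positivity
  set c : ℝ := 1 - (-(η * Real.logb 2 η) - (1 - η) * Real.logb 2 (1 - η)) with hcdef
  -- c > 0
  have hc : 0 < c := by
    have l1 : Real.log (1 / (2 * η)) < 1 / (2 * η) - 1 := by
      apply Real.log_lt_sub_one_of_pos (by positivity)
      intro hcon
      have : 2 * η = 1 := by
        field_simp at hcon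
        linarith
      linarith
    have l2 : Real.log (1 / (2 * (1 - η))) ≤ 1 / (2 * (1 - η)) - 1 :=
      Real.log_le_sub_one_of_pos (by positivity)
    have e1 : Real.log (1 / (2 * η)) = -(Real.log 2 + Real.log η) := by
      rw [one_div, Real.log_inv, Real.log_mul two_ne_zero hη.ne']
    have e2 : Real.log (1 / (2 * (1 - η))) = -(Real.log 2 + Real.log (1 - η)) := by
      rw [one_div, Real.log_inv, Real.log_mul two_ne_zero hη1.ne']
    rw [e1] at l1; rw [e2] at l2
    have m1 : η * (-(Real.log 2 + Real.log η)) < η * (1 / (2 * η) - 1) :=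
      (mul_lt_mul_iff_right₀ hη).2 l1
    have m2 : (1 - η) * (-(Real.log 2 + Real.log (1 - η))) ≤ (1 - η) * (1 / (2 * (1 - η)) - 1) :=
      mul_le_mul_of_nonneg_left l2 hη1.le
    have s1 : η * (1 / (2 * η) - 1) = 1 / 2 - η := by field_simp
    have s2 : (1 - η) * (1 / (2 * (1 - η)) - 1) = 1 / 2 - (1 - η) := by field_simp
    rw [s1] at m1; rw [s2] at m2
    -- so  Real.log 2 + η log η + (1-η) log (1-η) > 0
    have key : 0 < Real.log 2 + η * Real.log η + (1 - η) * Real.log (1 - η) := by nlinarith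
    have : c = (Real.log 2 + η * Real.log η + (1 - η) * Real.log (1 - η)) / Real.log 2 := by
      rw [hcdef, Real.logb, Real.logb]
      field_simp
      ring
    rw [this]
    positivity
  -- abbreviations
  set a : (Fin n → Bool) → ℝ := fun x => E (x, fS x) with hadef
  set b : (Fin n → Bool) → ℝ := fun x => E (x, !(fS x)) with hbdef
  have hapos : ∀ x, 0 < a x := fun x => hEpos _
  have hbpos : ∀ x, 0 < b x := fun x => hEpos _
  have hmpos : ∀ x, 0 < a x + b x := fun x => add_pos (hapos x) (hbpos x)
  -- splitting a sum over ω into sums over x with b ∈ {fS x, !fS x}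
  have hsplit : ∀ g : ((Fin n → Bool) × Bool) → ℝ,
      ∑ ω, g ω = ∑ x : Fin n → Bool, (g (x, fS x) + g (x, !(fS x))) := by
    intro g
    rw [Fintype.sum_prod_type]
    apply Finset.sum_congr rfl
    intro x _
    rw [Fintype.sum_bool]
    cases h : fS x <;> simp [h] <;> ring
  -- sum of masses
  have hmsum : ∑ x : Fin n → Bool, (a x + b x) = 1 := by
    rw [← hsplit E] at *
    exact hEsum
  -- KL as a sum over x
  have hKLx : ∑ ω, PS ω * Real.logb 2 (PS ω / E ω)
      = ∑ x : Fin n → Bool, ((1 - η) / N * Real.logb 2 (((1 - η) / N) / a x)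
          + η / N * Real.logb 2 ((η / N) / b x)) := by
    rw [hsplit fun ω => PS ω * Real.logb 2 (PS ω / E ω)]
    apply Finset.sum_congr rfl
    intro x _
    have p1 : PS (x, fS x) = (1 - η) / N := by rw [hPS]; simp [hNdef]
    have p2 : PS (x, !(fS x)) = η / N := by
      rw [hPS]; simp [hNdef]
    rw [p1, p2]
  -- per-x decomposition
  set D : (Fin n → Bool) → ℝ := fun x =>
    (1 - η) * Real.logb 2 ((1 - η) * (a x + b x) / a x)
      + η * Real.logb 2 (η * (a x + b x) / b x) with hDdef
  have hdecomp : ∀ x : Fin n → Bool,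
      (1 - η) / N * Real.logb 2 (((1 - η) / N) / a x)
        + η / N * Real.logb 2 ((η / N) / b x)
      = 1 / N * Real.logb 2 ((1 / N) / (a x + b x)) + 1 / N * D x := by
    intro x
    have hA := hapos x; have hB := hbpos x; have hM := hmpos x
    simp only [hDdef]
    rw [Real.logb_div (by positivity) hA.ne', Real.logb_div hη1.ne' hN.ne',
        Real.logb_div (by positivity) hB.ne', Real.logb_div hη.ne' hN.ne',
        Real.logb_div (by positivity) hM.ne', Real.logb_div one_ne_zero hN.ne',
        Real.logb_one,
        Real.logb_div (by positivity) hA.ne', Real.logb_mul hη1.ne' hM.ne',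
        Real.logb_div (by positivity) hB.ne', Real.logb_mul hη.ne' hM.ne']
    field_simp
    ring
  -- D x ≥ 0 for all x
  have hDnonneg : ∀ x : Fin n → Bool, 0 ≤ D x := by
    intro x
    have hA := hapos x; have hB := hbpos x; have hM := hmpos x
    have h2 := two_point (p := 1 - η) (q := η) (a := a x / (a x + b x))
      (b := b x / (a x + b x)) hη1 hη (by positivity) (by positivity)
      (by rw [← add_div, div_self hM.ne']; linarith)
    have e1 : (1 - η) / (a x / (a x + b x)) = (1 - η) * (a x + b x) / a x := by
      rw [div_div_eq_mul_div]
    have e2 : η / (b x / (a x + b x)) = η * (a x + b x) / b x := by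
      rw [div_div_eq_mul_div]
    rw [e1, e2] at h2
    exact h2
  -- D x ≥ c on the bad set
  have hDbad : ∀ x : Fin n → Bool, E' x ≠ fS x → c ≤ D x := by
    intro x hx
    have hab : a x ≤ b x := by
      by_contra hcon
      push_neg at hcon
      rw [hE' x, if_neg (not_le.2 hcon)] at hx
      exact hx rfl
    have hA := hapos x; have hB := hbpos x; have hM := hmpos x
    -- (1-η) logb (2a/m) + η logb (2b/m) ≤ 0
    have l1 := logb2_le (t := 2 * a x / (a x + b x)) (by positivity)
    have l2 := logb2_le (t := 2 * b x / (a x + b x)) (by positivity)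
    have m1 : (1 - η) * Real.logb 2 (2 * a x / (a x + b x))
        ≤ (1 - η) * ((2 * a x / (a x + b x) - 1) / Real.log 2) :=
      mul_le_mul_of_nonneg_left l1 hη1.le
    have m2 : η * Real.logb 2 (2 * b x / (a x + b x))
        ≤ η * ((2 * b x / (a x + b x) - 1) / Real.log 2) :=
      mul_le_mul_of_nonneg_left l2 hη.le
    have e3 : (1 - η) * ((2 * a x / (a x + b x) - 1) / Real.log 2)
        + η * ((2 * b x / (a x + b x) - 1) / Real.log 2)
        = ((2 * ((1 - η) * a x + η * b x) - (a x + b x)) / (a x + b x)) / Real.log 2 := by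
      field_simp
      ring
    have hnum : 2 * ((1 - η) * a x + η * b x) - (a x + b x) ≤ 0 := by nlinarith
    have e4 : ((2 * ((1 - η) * a x + η * b x) - (a x + b x)) / (a x + b x)) / Real.log 2 ≤ 0 :=
      div_nonpos_of_nonpos_of_nonneg (div_nonpos_of_nonpos_of_nonneg hnum hM.le) log2pos.le
    have key : (1 - η) * Real.logb 2 (2 * a x / (a x + b x))
        + η * Real.logb 2 (2 * b x / (a x + b x)) ≤ 0 := by linarith
    -- expand logs
    have x1 : Real.logb 2 (2 * a x / (a x + b x))
        = 1 + Real.logb 2 (a x) - Real.logb 2 (a x + b x) := by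
      rw [Real.logb_div (by positivity) hM.ne', Real.logb_mul two_ne_zero hA.ne',
        Real.logb_self_eq_one one_lt_two]
    have x2 : Real.logb 2 (2 * b x / (a x + b x))
        = 1 + Real.logb 2 (b x) - Real.logb 2 (a x + b x) := by
      rw [Real.logb_div (by positivity) hM.ne', Real.logb_mul two_ne_zero hB.ne',
        Real.logb_self_eq_one one_lt_two]
    rw [x1, x2] at key
    have dexp : D x = (1 - η) * (Real.logb 2 (1 - η) + Real.logb 2 (a x + b x)
          - Real.logb 2 (a x))
        + η * (Real.logb 2 η + Real.logb 2 (a x + b x) - Real.logb 2 (b x)) := by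
      simp only [hDdef]
      rw [Real.logb_div (by positivity) hA.ne', Real.logb_mul hη1.ne' hM.ne',
        Real.logb_div (by positivity) hB.ne', Real.logb_mul hη.ne' hM.ne']
    rw [dexp, hcdef]
    linarith [key]
  -- marginal Gibbs: first part of KL is nonneg
  have hmarg : 0 ≤ ∑ x : Fin n → Bool, 1 / N * Real.logb 2 ((1 / N) / (a x + b x)) := by
    apply gibbs_sum Finset.univ (fun _ => 1 / N) (fun x => a x + b x)
      (fun _ _ => by positivity) (fun x _ => hmpos x)
    rw [hmsum, Finset.sum_const, Finset.card_univ]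
    have : (Fintype.card (Fin n → Bool) : ℝ) = N := by
      simp [hNdef]
    rw [nsmul_eq_mul]
    rw [this]
    rw [mul_one_div, div_self hN.ne']
  -- sum over bad set
  set B : Finset (Fin n → Bool) := Finset.univ.filter fun x => E' x ≠ fS x with hBdef
  have hbad_sum : (B.card : ℝ) * c ≤ ∑ x : Fin n → Bool, D x := by
    calc (B.card : ℝ) * c = ∑ _x ∈ B, c := by rw [Finset.sum_const, nsmul_eq_mul]
      _ ≤ ∑ x ∈ B, D x := by
          apply Finset.sum_le_sum
          intro x hx
          exact hDbad x (Finset.mem_filter.1 hx).2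
      _ ≤ ∑ x : Fin n → Bool, D x := by
          apply Finset.sum_le_sum_of_subset_of_nonneg (Finset.subset_univ B)
          intro x _ _
          exact hDnonneg x
  -- assemble
  have hKLdecomp : ∑ ω, PS ω * Real.logb 2 (PS ω / E ω)
      = (∑ x : Fin n → Bool, 1 / N * Real.logb 2 ((1 / N) / (a x + b x)))
        + (1 / N) * ∑ x : Fin n → Bool, D x := by
    rw [hKLx, Finset.mul_sum, ← Finset.sum_add_distrib]
    exact Finset.sum_congr rfl fun x _ => hdecomp x
  have hchain : (1 / N) * ((B.card : ℝ) * c) ≤ ε * c := by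
    have h1 : (1 / N) * ((B.card : ℝ) * c) ≤ (1 / N) * ∑ x : Fin n → Bool, D x :=
      mul_le_mul_of_nonneg_left hbad_sum (by positivity)
    have h2 : (1 / N) * ∑ x : Fin n → Bool, D x ≤ ∑ ω, PS ω * Real.logb 2 (PS ω / E ω) := by
      rw [hKLdecomp]; linarith
    linarith
  have : (B.card : ℝ) / N * c ≤ ε * c := by
    calc (B.card : ℝ) / N * c = (1 / N) * ((B.card : ℝ) * c) := by ring
      _ ≤ ε * c := hchain
  exact le_of_mul_le_mul_right this hc
end

section
/- In the noisy-parity quantum generator started at basis state (0,0,0), for every time t with t mod (n+1) = j and j ≥ min(S), the state |ψ_t⟩ is supported on a basis state (j,k,ℓ) where k = ⊕_{t' > t−j, t' mod (n+1) ∈ S} x_{t'}, i.e., the first coordinate of the 'half' index records the running parity of the measured bits at positions in S within the current block. -/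
/- ### Auxiliary lemmas -/

lemma mulVec_basis {ι : Type*} [Fintype ι] [DecidableEq ι] (M : Matrix ι ι ℂ) (c : ι) (ρ : ℂ) :
    M.mulVec (fun i => if i = c then ρ else 0) = fun i => M i c * ρ := by
  funext i
  simp [Matrix.mulVec, dotProduct, mul_ite, mul_zero, Finset.sum_ite_eq']

lemma normalize_basis {ι : Type*} [Fintype ι] [DecidableEq ι] (w : ι → ℂ) (r : ι) (a ρ : ℂ)
    (hw : w = fun i => if i = r then a * ρ else 0) (ha : a ≠ 0) (hρ : ‖ρ‖ = 1) :
    ∃ ρ' : ℂ, ‖ρ'‖ = 1 ∧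
      ((Real.sqrt (∑ i, Complex.normSq (w i)) : ℝ) : ℂ)⁻¹ • w
        = fun i => if i = r then ρ' else 0 := by
  subst hw
  have hsum : (∑ i, Complex.normSq (if i = r then a * ρ else 0)) = Complex.normSq (a * ρ) := by
    rw [Fintype.sum_eq_single r]
    · simp
    · intro i hi; simp [hi]
  have habs : Real.sqrt (Complex.normSq (a * ρ)) = ‖a‖ := by
    rw [← Complex.norm_def, norm_mul, hρ, mul_one]
  refine ⟨((‖a‖ : ℝ) : ℂ)⁻¹ * (a * ρ), ?_, ?_⟩
  · rw [norm_mul, norm_inv, norm_mul, hρ, mul_one, Complex.norm_real, Real.norm_eq_abs,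
      abs_of_nonneg (norm_nonneg a), inv_mul_cancel₀ (norm_ne_zero_iff.mpr ha)]
  · funext i
    rw [hsum, habs]
    by_cases hi : i = r <;> simp [hi, Pi.smul_apply, smul_eq_mul]

lemma qg_step {ι : Type*} [Fintype ι] [DecidableEq ι] (U : Matrix ι ι ℂ) (meas : ι → Bool)
    (c r1 r2 : ι) (a b ρ : ℂ) (x : Bool) (w : ι → ℂ)
    (hw : w = fun i => if meas i = x then U.mulVec (fun i' => if i' = c then ρ else 0) i else 0)
    (hU : ∀ r, U r c = if r = r1 then a else if r = r2 then b else 0)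
    (hm : meas r2 = !(meas r1)) (ha : a ≠ 0) (hb : b ≠ 0) (hρ : ‖ρ‖ = 1) :
    ∃ ρ' : ℂ, ‖ρ'‖ = 1 ∧
      ((Real.sqrt (∑ i, Complex.normSq (w i)) : ℝ) : ℂ)⁻¹ • w
        = fun i => if i = (if x = meas r1 then r1 else r2) then ρ' else 0 := by
  have hne : r1 ≠ r2 := by
    intro h; rw [h] at hm; simp at hm
  rw [mulVec_basis] at hw
  by_cases hx : x = meas r1
  · rw [if_pos hx]
    refine normalize_basis w r1 a ρ ?_ ha hρ
    rw [hw]; funext i; beta_reduce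
    by_cases hi : i = r1
    · subst hi; rw [if_pos hx.symm, hU, if_pos rfl, if_pos rfl]
    · rw [if_neg hi]
      by_cases hmi : meas i = x
      · rw [if_pos hmi, hU, if_neg hi]
        by_cases hi2 : i = r2
        · subst hi2; rw [hm, hx] at hmi; simp at hmi
        · rw [if_neg hi2, zero_mul]
      · rw [if_neg hmi]
  · rw [if_neg hx]
    have hx2 : x = meas r2 := by rw [hm]; cases hmr : meas r1 <;> rw [hmr] at hx <;>
      cases x <;> simp_all
    refine normalize_basis w r2 b ρ ?_ hb hρ
    rw [hw]; funext i; beta_reduce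
    by_cases hi : i = r2
    · subst hi; rw [if_pos hx2.symm, hU, if_neg (Ne.symm hne), if_pos rfl, if_pos rfl]
    · rw [if_neg hi]
      by_cases hmi : meas i = x
      · rw [if_pos hmi, hU]
        by_cases hi1 : i = r1
        · exact absurd (hi1 ▸ hmi) (by subst hi1; exact fun h => hx h.symm)
        · rw [if_neg hi1, if_neg hi, zero_mul]
      · rw [if_neg hmi]

open Classical in
lemma qgU_apply' (n : ℕ) (S : Finset ℕ) (η : ℝ) (r : Fin (n+1) × Bool × Bool)
    (jv : ℕ) (hjv : jv < n+1) (k l : Bool) :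
    qgU n S η r (⟨jv, hjv⟩, k, l) =
    if jv < n then
      if jv + 1 ∉ S then
        if r = ((⟨jv, hjv⟩ : Fin (n+1)) + 1, k, l) then ((Real.sqrt 2 : ℝ) : ℂ)⁻¹
        else if r = ((⟨jv, hjv⟩ : Fin (n+1)) + 1, k, !l) then
          Complex.I * ((Real.sqrt 2 : ℝ) : ℂ)⁻¹
        else 0
      else if jv + 1 = sInf (S : Set ℕ) then
        if r = ((⟨jv, hjv⟩ : Fin (n+1)) + 1, k, l) then ((Real.sqrt 2 : ℝ) : ℂ)⁻¹
        else if r = ((⟨jv, hjv⟩ : Fin (n+1)) + 1, !k, l) then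
          Complex.I * ((Real.sqrt 2 : ℝ) : ℂ)⁻¹
        else 0
      else
        if r = ((⟨jv, hjv⟩ : Fin (n+1)) + 1, xor k l, k) then ((Real.sqrt 2 : ℝ) : ℂ)⁻¹
        else if r = ((⟨jv, hjv⟩ : Fin (n+1)) + 1, !(xor k l), k) then
          Complex.I * ((Real.sqrt 2 : ℝ) : ℂ)⁻¹
        else 0
    else
      if r = ((⟨jv, hjv⟩ : Fin (n+1)) + 1, k, l) then ((Real.sqrt (1 - η) : ℝ) : ℂ)
      else if r = ((⟨jv, hjv⟩ : Fin (n+1)) + 1, !k, l) then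
        Complex.I * ((Real.sqrt η : ℝ) : ℂ)
      else 0 := rfl

open Classical in
lemma qgMeas_apply' (n : ℕ) (S : Finset ℕ) (jv : ℕ) (hjv : jv < n+1) (k l : Bool) :
    qgMeas n S (⟨jv, hjv⟩, k, l) =
    if jv ≠ 0 ∧ jv ∉ S then l
    else if jv ∈ S ∧ jv ≠ sInf (S : Set ℕ) then xor k l
    else k := rfl

lemma block_mod (n t t' : ℕ) (h1 : t - t % (n+1) < t') (h2 : t' ≤ t) :
    t' % (n+1) = t' - (t - t % (n+1)) := by
  have hd := Nat.div_add_mod t (n+1)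
  have hm : t % (n+1) < n+1 := Nat.mod_lt t (by omega)
  have h3 : t' = (n+1) * (t / (n+1)) + (t' - (t - t % (n+1))) := by omega
  have h4 : t' - (t - t % (n+1)) < n+1 := by omega
  conv_lhs => rw [h3, Nat.mul_add_mod]
  exact Nat.mod_eq_of_lt h4

lemma succ_mod (n t : ℕ) (h : t % (n+1) < n) : (t+1) % (n+1) = t % (n+1) + 1 := by
  have hd := Nat.div_add_mod t (n+1)
  have h3 : t + 1 = (n+1) * (t / (n+1)) + (t % (n+1) + 1) := by omega
  rw [h3, Nat.mul_add_mod]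
  exact Nat.mod_eq_of_lt (by omega)

lemma succ_mod_zero (n t : ℕ) (h : t % (n+1) = n) : (t+1) % (n+1) = 0 := by
  have hd := Nat.div_add_mod t (n+1)
  have h3 : t + 1 = (n+1) * (t / (n+1)) + (n+1) := by omega
  rw [h3, Nat.mul_add_mod, Nat.mod_self]

lemma fin_succ_eq (n t : ℕ) (hjlt : t % (n+1) < n+1) (h : t % (n+1) < n) :
    (⟨t % (n+1), hjlt⟩ : Fin (n+1)) + 1
      = ⟨(t+1) % (n+1), Nat.mod_lt (t+1) (Nat.succ_pos n)⟩ := by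
  apply Fin.ext
  simp only [Fin.val_add, Fin.val_one']
  show (t % (n+1) + 1 % (n+1)) % (n+1) = (t+1) % (n+1)
  have h1 : (1:ℕ) % (n+1) = 1 := Nat.mod_eq_of_lt (by omega)
  have h2 : (t % (n+1) + 1) % (n+1) = t % (n+1) + 1 := Nat.mod_eq_of_lt (by omega)
  rw [succ_mod n t h, h1, h2]

lemma fin_succ_eq_zero (n t : ℕ) (hn : 1 ≤ n) (hjlt : t % (n+1) < n+1) (h : t % (n+1) = n) :
    (⟨t % (n+1), hjlt⟩ : Fin (n+1)) + 1
      = ⟨(t+1) % (n+1), Nat.mod_lt (t+1) (Nat.succ_pos n)⟩ := by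
  apply Fin.ext
  simp only [Fin.val_add, Fin.val_one']
  show (t % (n+1) + 1 % (n+1)) % (n+1) = (t+1) % (n+1)
  have h1 : (1:ℕ) % (n+1) = 1 := Nat.mod_eq_of_lt (by omega)
  rw [succ_mod_zero n t h, h, h1, Nat.mod_self]

open Classical in

open Classical in
/-- Parity invariant: in the noisy-parity quantum generator started at basis state `(0,0,0)`,
for every time `t` with `t mod (n+1) = j ≥ min S`, the state `ψ_t` is supported on a basis
state `(j,k,ℓ)` whose half-index `k` equals the XOR of the measured bits `x_{t'}` over
`t' ∈ (t-j, t]` with `t' mod (n+1) ∈ S`. -/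
theorem stmt18 (n : ℕ) (hn : 1 ≤ n) (S : Finset ℕ) (hS : S.Nonempty)
    (hSsub : S ⊆ Finset.Icc 1 n) (η : ℝ) (hη : 0 < η) (hη' : η < 1 / 2)
    (x : ℕ → Bool) (ψ : ℕ → (Fin (n + 1) × Bool × Bool → ℂ))
    (hψ0 : ψ 0 = fun i => if i = (0, false, false) then 1 else 0)
    (hnz : ∀ t, qgProj n S (x (t + 1)) ((qgU n S η).mulVec (ψ t)) ≠ 0)
    (hstep : ∀ t, ψ (t + 1) =
      ((Real.sqrt (∑ i, Complex.normSq
        (qgProj n S (x (t + 1)) ((qgU n S η).mulVec (ψ t)) i)) : ℝ) : ℂ)⁻¹ •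
        qgProj n S (x (t + 1)) ((qgU n S η).mulVec (ψ t))) :
    ∀ t : ℕ, sInf (S : Set ℕ) ≤ t % (n + 1) →
      ∃ (ρ : ℂ) (l : Bool), ‖ρ‖ = 1 ∧
        ψ t = fun i => if i =
            ((⟨t % (n + 1), Nat.mod_lt t (Nat.succ_pos n)⟩ : Fin (n + 1)),
             decide (Odd (((Finset.Ioc (t - t % (n + 1)) t).filter
               fun t' => t' % (n + 1) ∈ S ∧ x t' = true).card)),
             l)
          then ρ else 0 := by
  have hSne : (S : Set ℕ).Nonempty := by exact_mod_cast hS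
  have hSmem : sInf (S : Set ℕ) ∈ S := by exact_mod_cast Nat.sInf_mem hSne
  have hS1 : 1 ≤ sInf (S : Set ℕ) ∧ sInf (S : Set ℕ) ≤ n := by
    have := hSsub hSmem; simpa [Finset.mem_Icc] using this
  have hSle : ∀ s ∈ S, sInf (S : Set ℕ) ≤ s := fun s hs => Nat.sInf_le (by exact_mod_cast hs)
  have h0S : (0 : ℕ) ∉ S := fun h => by
    have := hSsub h; simp [Finset.mem_Icc] at this
  suffices H : ∀ t : ℕ, ∃ (ρ : ℂ) (k l : Bool), ‖ρ‖ = 1 ∧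
      ψ t = (fun i => if i =
          ((⟨t % (n + 1), Nat.mod_lt t (Nat.succ_pos n)⟩ : Fin (n + 1)), k, l)
        then ρ else 0) ∧
      (sInf (S : Set ℕ) ≤ t % (n + 1) →
        k = decide (Odd (((Finset.Ioc (t - t % (n + 1)) t).filter
          fun t' => t' % (n + 1) ∈ S ∧ x t' = true).card))) by
    intro t ht
    obtain ⟨ρ, k, l, h1, h2, h3⟩ := H t
    exact ⟨ρ, l, h1, by rw [h2, h3 ht]⟩
  intro t
  induction t with
  | zero =>
    refine ⟨1, false, false, by simp, ?_, ?_⟩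
    · rw [hψ0]
      have h0 : ((0 : Fin (n+1)), false, false)
          = ((⟨0 % (n + 1), Nat.mod_lt 0 (Nat.succ_pos n)⟩ : Fin (n + 1)), false, false) := by
        simp [Prod.ext_iff, Fin.ext_iff]
      rw [h0]
    · intro h
      rw [Nat.zero_mod] at h
      omega
  | succ t IH =>
    obtain ⟨ρ, k, l, hρ, hψt, hk⟩ := IH
    have hjlt : t % (n+1) < n+1 := Nat.mod_lt t (Nat.succ_pos n)
    have hw : qgProj n S (x (t + 1)) ((qgU n S η).mulVec (ψ t)) =
        fun i => if qgMeas n S i = x (t + 1) then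
          ((qgU n S η).mulVec (fun i' =>
            if i' = ((⟨t % (n + 1), Nat.mod_lt t (Nat.succ_pos n)⟩ : Fin (n + 1)), k, l)
            then ρ else 0)) i else 0 := by
      rw [hψt]; rfl
    have hsqrt2 : ((Real.sqrt 2 : ℝ) : ℂ)⁻¹ ≠ 0 := by
      apply inv_ne_zero
      exact_mod_cast Real.sqrt_ne_zero'.mpr (by norm_num)
    have hsqrt2' : Complex.I * ((Real.sqrt 2 : ℝ) : ℂ)⁻¹ ≠ 0 :=
      mul_ne_zero Complex.I_ne_zero hsqrt2
    by_cases hjn : t % (n+1) < n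
    · -- within a block
      have hmod1 : (t+1) % (n+1) = t % (n+1) + 1 := succ_mod n t hjn
      have hfin : (⟨t % (n+1), Nat.mod_lt t (Nat.succ_pos n)⟩ : Fin (n+1)) + 1
          = ⟨(t+1) % (n+1), Nat.mod_lt (t+1) (Nat.succ_pos n)⟩ := fin_succ_eq n t hjlt hjn
      have hsub : (t+1) - (t+1) % (n+1) = t - t % (n+1) := by omega
      have hins : Finset.Ioc (t - t % (n+1)) (t+1)
          = insert (t+1) (Finset.Ioc (t - t % (n+1)) t) := by
        ext m; simp only [Finset.mem_Ioc, Finset.mem_insert]; omega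
      have hnm : (t+1) ∉ Finset.Ioc (t - t % (n+1)) t := by simp [Finset.mem_Ioc]
      set f1 : Fin (n+1) := ⟨(t+1) % (n+1), Nat.mod_lt (t+1) (Nat.succ_pos n)⟩ with hf1
      by_cases h1 : t % (n+1) + 1 ∈ S
      · by_cases h2 : t % (n+1) + 1 = sInf (S : Set ℕ)
        · -- entering min S : k is reset to x (t+1)
          have hU : ∀ r, qgU n S η r (⟨t % (n+1), Nat.mod_lt t (Nat.succ_pos n)⟩, k, l) =
              if r = (f1, k, l) then ((Real.sqrt 2 : ℝ) : ℂ)⁻¹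
              else if r = (f1, !k, l) then Complex.I * ((Real.sqrt 2 : ℝ) : ℂ)⁻¹
              else 0 := by
            intro r
            rw [qgU_apply', if_pos hjn, if_neg (by simpa using h1), if_pos h2, hfin]
          have hmr1 : qgMeas n S (f1, k, l) = k := by
            rw [hf1, qgMeas_apply', if_neg (by rw [hmod1]; exact fun h => h.2 h1),
              if_neg (by rw [hmod1]; exact fun h => h.2 h2)]
          have hmr2 : qgMeas n S (f1, !k, l) = !k := by
            rw [hf1, qgMeas_apply', if_neg (by rw [hmod1]; exact fun h => h.2 h1),
              if_neg (by rw [hmod1]; exact fun h => h.2 h2)]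
          obtain ⟨ρ', hρ', heq⟩ := qg_step (qgU n S η) (qgMeas n S)
            (⟨t % (n+1), Nat.mod_lt t (Nat.succ_pos n)⟩, k, l) (f1, k, l) (f1, !k, l)
            (((Real.sqrt 2 : ℝ) : ℂ)⁻¹) (Complex.I * ((Real.sqrt 2 : ℝ) : ℂ)⁻¹) ρ (x (t+1))
            _ hw hU (by rw [hmr1, hmr2]) hsqrt2 hsqrt2' hρ
          have hidx : (if x (t+1) = qgMeas n S (f1, k, l) then (f1, k, l) else (f1, !k, l))
              = (f1, x (t+1), l) := by
            rw [hmr1]; cases hxk : x (t+1) <;> cases k <;> simp [hxk]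
          refine ⟨ρ', x (t+1), l, hρ', ?_, ?_⟩
          · rw [hstep t, heq, hidx]
          · intro _
            have hold : (Finset.Ioc (t - t % (n+1)) t).filter
                (fun t' => t' % (n + 1) ∈ S ∧ x t' = true) = ∅ := by
              rw [Finset.filter_eq_empty_iff]
              intro m hm hQ
              rw [Finset.mem_Ioc] at hm
              have hbm := block_mod n t m hm.1 hm.2
              have h5 := hSle _ hQ.1
              omega
            have hfe : (Finset.Ioc ((t+1) - (t+1) % (n+1)) (t+1)).filter
                (fun t' => t' % (n + 1) ∈ S ∧ x t' = true)
                = if x (t+1) = true then {t+1} else ∅ := by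
              rw [hsub, hins, Finset.filter_insert, hold]
              by_cases hx : x (t+1) = true
              · rw [if_pos ⟨by rw [hmod1]; exact h1, hx⟩, if_pos hx]; rfl
              · rw [if_neg (fun h => hx h.2), if_neg hx]
            rw [hfe]
            cases hx : x (t+1) <;> simp [hx]
        · -- inside S, past min S : k picks up x (t+1)
          have hminle : sInf (S : Set ℕ) ≤ t % (n+1) := by
            have := hSle _ h1; omega
          have hkk := hk hminle
          have hU : ∀ r, qgU n S η r (⟨t % (n+1), Nat.mod_lt t (Nat.succ_pos n)⟩, k, l) =
              if r = (f1, xor k l, k) then ((Real.sqrt 2 : ℝ) : ℂ)⁻¹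
              else if r = (f1, !(xor k l), k) then Complex.I * ((Real.sqrt 2 : ℝ) : ℂ)⁻¹
              else 0 := by
            intro r
            rw [qgU_apply', if_pos hjn, if_neg (by simpa using h1), if_neg h2, hfin]
          have hmr1 : qgMeas n S (f1, xor k l, k) = l := by
            rw [hf1, qgMeas_apply', if_neg (by rw [hmod1]; exact fun h => h.2 h1),
              if_pos (by rw [hmod1]; exact ⟨h1, h2⟩)]
            cases k <;> cases l <;> rfl
          have hmr2 : qgMeas n S (f1, !(xor k l), k) = !l := by
            rw [hf1, qgMeas_apply', if_neg (by rw [hmod1]; exact fun h => h.2 h1),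
              if_pos (by rw [hmod1]; exact ⟨h1, h2⟩)]
            cases k <;> cases l <;> rfl
          obtain ⟨ρ', hρ', heq⟩ := qg_step (qgU n S η) (qgMeas n S)
            (⟨t % (n+1), Nat.mod_lt t (Nat.succ_pos n)⟩, k, l) (f1, xor k l, k)
            (f1, !(xor k l), k)
            (((Real.sqrt 2 : ℝ) : ℂ)⁻¹) (Complex.I * ((Real.sqrt 2 : ℝ) : ℂ)⁻¹) ρ (x (t+1))
            _ hw hU (by rw [hmr1, hmr2]) hsqrt2 hsqrt2' hρ
          have hidx : (if x (t+1) = qgMeas n S (f1, xor k l, k)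
                then (f1, xor k l, k) else (f1, !(xor k l), k))
              = (f1, xor k (x (t+1)), k) := by
            rw [hmr1]; cases hxk : x (t+1) <;> cases k <;> cases l <;> simp [hxk]
          refine ⟨ρ', xor k (x (t+1)), k, hρ', ?_, ?_⟩
          · rw [hstep t, heq, hidx]
          · intro _
            have hc : ((Finset.Ioc ((t+1) - (t+1) % (n+1)) (t+1)).filter
                (fun t' => t' % (n + 1) ∈ S ∧ x t' = true)).card
                = ((Finset.Ioc (t - t % (n+1)) t).filter
                  (fun t' => t' % (n + 1) ∈ S ∧ x t' = true)).card
                  + (if x (t+1) = true then 1 else 0) := by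
              rw [hsub, hins, Finset.filter_insert]
              by_cases hx : x (t+1) = true
              · rw [if_pos ⟨by rw [hmod1]; exact h1, hx⟩, if_pos hx,
                  Finset.card_insert_of_notMem (fun hmem => hnm (Finset.mem_of_mem_filter _ hmem))]
              · rw [if_neg (fun h => hx h.2)]; simp [hx]
            rw [hc, hkk]
            cases hx : x (t+1) <;>
              simp [hx, Nat.odd_add_one, ← Nat.not_even_iff_odd, decide_not]
      · -- j+1 not in S : k unchanged
        have hU : ∀ r, qgU n S η r (⟨t % (n+1), Nat.mod_lt t (Nat.succ_pos n)⟩, k, l) =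
            if r = (f1, k, l) then ((Real.sqrt 2 : ℝ) : ℂ)⁻¹
            else if r = (f1, k, !l) then Complex.I * ((Real.sqrt 2 : ℝ) : ℂ)⁻¹
            else 0 := by
          intro r
          rw [qgU_apply', if_pos hjn, if_pos (by simpa using h1), hfin]
        have hmr1 : qgMeas n S (f1, k, l) = l := by
          rw [hf1, qgMeas_apply', if_pos ⟨by omega, by rw [hmod1]; exact h1⟩]
        have hmr2 : qgMeas n S (f1, k, !l) = !l := by
          rw [hf1, qgMeas_apply', if_pos ⟨by omega, by rw [hmod1]; exact h1⟩]
        obtain ⟨ρ', hρ', heq⟩ := qg_step (qgU n S η) (qgMeas n S)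
          (⟨t % (n+1), Nat.mod_lt t (Nat.succ_pos n)⟩, k, l) (f1, k, l) (f1, k, !l)
          (((Real.sqrt 2 : ℝ) : ℂ)⁻¹) (Complex.I * ((Real.sqrt 2 : ℝ) : ℂ)⁻¹) ρ (x (t+1))
          _ hw hU (by rw [hmr1, hmr2]) hsqrt2 hsqrt2' hρ
        have hidx : (if x (t+1) = qgMeas n S (f1, k, l) then (f1, k, l) else (f1, k, !l))
            = (f1, k, if x (t+1) = l then l else !l) := by
          rw [hmr1]; cases hxk : x (t+1) <;> cases l <;> simp [hxk]
        refine ⟨ρ', k, if x (t+1) = l then l else !l, hρ', ?_, ?_⟩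
        · rw [hstep t, heq, hidx]
        · intro hle
          have hminle : sInf (S : Set ℕ) ≤ t % (n+1) := by
            rw [hmod1] at hle
            rcases Nat.lt_or_ge (sInf (S : Set ℕ)) (t % (n+1) + 1) with h | h
            · omega
            · exfalso; exact h1 (by have : sInf (S : Set ℕ) = t % (n+1) + 1 := by omega
                                    rw [← this]; exact hSmem)
          have hfe : (Finset.Ioc ((t+1) - (t+1) % (n+1)) (t+1)).filter
              (fun t' => t' % (n + 1) ∈ S ∧ x t' = true)
              = (Finset.Ioc (t - t % (n+1)) t).filter
                (fun t' => t' % (n + 1) ∈ S ∧ x t' = true) := by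
            rw [hsub, hins, Finset.filter_insert, if_neg (by rw [hmod1]; exact fun h => h1 h.1)]
          rw [hfe]
          exact hk hminle
    · -- end of block : noise step, wraps to j = 0
      have hjeq : t % (n+1) = n := by omega
      have hfin : (⟨t % (n+1), Nat.mod_lt t (Nat.succ_pos n)⟩ : Fin (n+1)) + 1
          = ⟨(t+1) % (n+1), Nat.mod_lt (t+1) (Nat.succ_pos n)⟩ :=
        fin_succ_eq_zero n t hn hjlt hjeq
      have hmod0 : (t+1) % (n+1) = 0 := succ_mod_zero n t hjeq
      set f1 : Fin (n+1) := ⟨(t+1) % (n+1), Nat.mod_lt (t+1) (Nat.succ_pos n)⟩ with hf1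
      have ha : ((Real.sqrt (1 - η) : ℝ) : ℂ) ≠ 0 := by
        exact_mod_cast Real.sqrt_ne_zero'.mpr (by linarith)
      have hb : Complex.I * ((Real.sqrt η : ℝ) : ℂ) ≠ 0 :=
        mul_ne_zero Complex.I_ne_zero
          (by exact_mod_cast Real.sqrt_ne_zero'.mpr hη)
      have hU : ∀ r, qgU n S η r (⟨t % (n+1), Nat.mod_lt t (Nat.succ_pos n)⟩, k, l) =
          if r = (f1, k, l) then ((Real.sqrt (1 - η) : ℝ) : ℂ)
          else if r = (f1, !k, l) then Complex.I * ((Real.sqrt η : ℝ) : ℂ)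
          else 0 := by
        intro r
        rw [qgU_apply', if_neg (by omega), hfin]
      have hmr1 : qgMeas n S (f1, k, l) = k := by
        rw [hf1, qgMeas_apply', if_neg (by rw [hmod0]; exact fun h => h.1 rfl),
          if_neg (by rw [hmod0]; exact fun h => h0S h.1)]
      have hmr2 : qgMeas n S (f1, !k, l) = !k := by
        rw [hf1, qgMeas_apply', if_neg (by rw [hmod0]; exact fun h => h.1 rfl),
          if_neg (by rw [hmod0]; exact fun h => h0S h.1)]
      obtain ⟨ρ', hρ', heq⟩ := qg_step (qgU n S η) (qgMeas n S)
        (⟨t % (n+1), Nat.mod_lt t (Nat.succ_pos n)⟩, k, l) (f1, k, l) (f1, !k, l)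
        (((Real.sqrt (1 - η) : ℝ) : ℂ)) (Complex.I * ((Real.sqrt η : ℝ) : ℂ)) ρ (x (t+1))
        _ hw hU (by rw [hmr1, hmr2]) ha hb hρ
      have hidx : (if x (t+1) = qgMeas n S (f1, k, l) then (f1, k, l) else (f1, !k, l))
          = (f1, x (t+1), l) := by
        rw [hmr1]; cases hxk : x (t+1) <;> cases k <;> simp [hxk]
      refine ⟨ρ', x (t+1), l, hρ', ?_, ?_⟩
      · rw [hstep t, heq, hidx]
      · intro hle
        rw [hmod0] at hle
        omega
end

section
/- The (n+1)-symbol output distribution of the noisy-parity quantum generator, started at basis state (0,0,0), equals the noisy parity distribution: the first n output symbols are uniform on {0,1}^n and the (n+1)-st symbol equals ⊕_{i∈S}x_i with probability 1−η and its complement with probability η, independently. -/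
open Classical in

lemma qg_mulVec_ind (n : ℕ) (S : Finset ℕ) (η : ℝ) (p : Fin (n+1) × Bool × Bool) (c : ℂ) :
    (qgU n S η).mulVec (fun i => if i = p then c else 0) = fun r => c * qgU n S η r p := by
  funext r
  simp [Matrix.mulVec, dotProduct, mul_ite, Finset.sum_ite_eq', mul_comm]

lemma qg_proj_ind (n : ℕ) (S : Finset ℕ) (η : ℝ) (o : Bool)
    (p r₀ r₁ : Fin (n+1) × Bool × Bool) (a₀ a₁ c : ℂ)
    (hcol : ∀ r, qgU n S η r p = if r = r₀ then a₀ else if r = r₁ then a₁ else 0)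
    (hne : r₀ ≠ r₁)
    (h0 : qgMeas n S r₀ = o) (h1 : qgMeas n S r₁ ≠ o) :
    qgProj n S o ((qgU n S η).mulVec (fun i => if i = p then c else 0)) =
      fun i => if i = r₀ then c * a₀ else 0 := by
  rw [qg_mulVec_ind]
  funext i
  simp only [qgProj, hcol]
  by_cases h : i = r₀
  · simp [h, h0]
  · by_cases h' : i = r₁
    · simp [h, h', h1, hne.symm]
    · simp [h, h']

lemma qg_proj_ind' (n : ℕ) (S : Finset ℕ) (η : ℝ) (o : Bool)
    (p r₀ r₁ : Fin (n+1) × Bool × Bool) (a₀ a₁ c : ℂ)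
    (hcol : ∀ r, qgU n S η r p = if r = r₀ then a₀ else if r = r₁ then a₁ else 0)
    (hne : r₀ ≠ r₁)
    (h0 : qgMeas n S r₀ ≠ o) (h1 : qgMeas n S r₁ = o) :
    qgProj n S o ((qgU n S η).mulVec (fun i => if i = p then c else 0)) =
      fun i => if i = r₁ then c * a₁ else 0 := by
  rw [qg_mulVec_ind]
  funext i
  simp only [qgProj, hcol]
  by_cases h : i = r₀
  · simp [h, h0, hne]
  · by_cases h' : i = r₁
    · simp [h, h', h1, hne.symm]
    · simp [h, h']

lemma sum_normSq_ind (n : ℕ) (r : Fin (n+1) × Bool × Bool) (c : ℂ) :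
    ∑ i, Complex.normSq (if i = r then c else 0) = Complex.normSq c := by
  simp [apply_ite Complex.normSq, Finset.sum_ite_eq']

lemma parity_step (S : Finset ℕ) (x : ℕ → Bool) (t : ℕ) :
    decide (Odd ((S.filter fun i => i ≤ t+1 ∧ x i = true).card))
      = xor (decide ((t+1) ∈ S) && x (t+1))
          (decide (Odd ((S.filter fun i => i ≤ t ∧ x i = true).card))) := by
  classical
  have hsplit : (S.filter fun i => i ≤ t+1 ∧ x i = true)
      = (S.filter fun i => i ≤ t ∧ x i = true) ∪ (S.filter fun i => i = t+1 ∧ x i = true) := by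
    ext a
    simp only [Finset.mem_filter, Finset.mem_union]
    constructor
    · rintro ⟨h1, h2, h3⟩
      rcases (show a ≤ t ∨ a = t + 1 by omega) with h | h
      · exact Or.inl ⟨h1, h, h3⟩
      · exact Or.inr ⟨h1, h, h3⟩
    · rintro (⟨h1, h2, h3⟩ | ⟨h1, h2, h3⟩) <;> exact ⟨h1, by omega, h3⟩
  have hdisj : Disjoint (S.filter fun i => i ≤ t ∧ x i = true)
      (S.filter fun i => i = t+1 ∧ x i = true) := by
    rw [Finset.disjoint_left]
    intro a ha hb
    simp only [Finset.mem_filter] at ha hb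
    omega
  have hB : (S.filter fun i => i = t+1 ∧ x i = true).card
      = if (t+1) ∈ S ∧ x (t+1) = true then 1 else 0 := by
    split_ifs with h
    · rw [show (S.filter fun i => i = t+1 ∧ x i = true) = {t+1} by
        ext a; simp only [Finset.mem_filter, Finset.mem_singleton]
        constructor
        · rintro ⟨_, h2, _⟩; exact h2
        · rintro rfl; exact ⟨h.1, rfl, h.2⟩]
      rfl
    · rw [show (S.filter fun i => i = t+1 ∧ x i = true) = ∅ by
        ext a; simp only [Finset.mem_filter, Finset.notMem_empty, iff_false]
        rintro ⟨h1, rfl, h3⟩; exact h ⟨h1, h3⟩]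
      rfl
  rw [hsplit, Finset.card_union_of_disjoint hdisj, hB]
  rcases Nat.even_or_odd ((S.filter fun i => i ≤ t ∧ x i = true).card) with he | ho
  · have hno : ¬ Odd ((S.filter fun i => i ≤ t ∧ x i = true).card) :=
      Nat.not_odd_iff_even.mpr he
    by_cases h1 : (t+1) ∈ S <;> by_cases h2 : x (t+1) = true <;>
      simp [h1, h2, Nat.odd_add_one, hno]
  · by_cases h1 : (t+1) ∈ S <;> by_cases h2 : x (t+1) = true <;>
      simp [h1, h2, Nat.odd_add_one, ho]

lemma parity_vanish (S : Finset ℕ) (x : ℕ → Bool) (t : ℕ) (h : ∀ i ∈ S, t < i) :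
    decide (Odd ((S.filter fun i => i ≤ t ∧ x i = true).card)) = false := by
  have : (S.filter fun i => i ≤ t ∧ x i = true) = ∅ := by
    ext a
    simp only [Finset.mem_filter, Finset.notMem_empty, iff_false]
    rintro ⟨h1, h2, _⟩
    exact absurd (h a h1) (by omega)
  simp [this]

lemma fin_add_one (n t : ℕ) (ht : t < n) :
    (⟨t, by omega⟩ : Fin (n+1)) + 1 = (⟨t+1, by omega⟩ : Fin (n+1)) := by
  apply Fin.ext
  rw [Fin.add_def]
  simp
  omega

lemma fin_last_add_one (n : ℕ) :
    (⟨n, by omega⟩ : Fin (n+1)) + 1 = (⟨0, by omega⟩ : Fin (n+1)) := by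
  apply Fin.ext
  rw [Fin.add_def]
  simp

lemma qg_col_A (n : ℕ) (S : Finset ℕ) (η : ℝ) (t : ℕ) (ht : t < n) (hmem : t + 1 ∉ S)
    (k l : Bool) (r : Fin (n+1) × Bool × Bool) :
    qgU n S η r (⟨t, by omega⟩, k, l) =
      if r = ((⟨t+1, by omega⟩ : Fin (n+1)), k, l) then ((Real.sqrt 2 : ℝ) : ℂ)⁻¹
      else if r = ((⟨t+1, by omega⟩ : Fin (n+1)), k, !l) then Complex.I * ((Real.sqrt 2 : ℝ) : ℂ)⁻¹
      else 0 := by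
  simp only [qgU, fin_add_one n t ht]
  simp [ht, hmem]

lemma qg_col_B (n : ℕ) (S : Finset ℕ) (η : ℝ) (t : ℕ) (ht : t < n) (hmem : t + 1 ∈ S)
    (hmin : t + 1 = sInf (S : Set ℕ)) (k l : Bool) (r : Fin (n+1) × Bool × Bool) :
    qgU n S η r (⟨t, by omega⟩, k, l) =
      if r = ((⟨t+1, by omega⟩ : Fin (n+1)), k, l) then ((Real.sqrt 2 : ℝ) : ℂ)⁻¹
      else if r = ((⟨t+1, by omega⟩ : Fin (n+1)), !k, l) then Complex.I * ((Real.sqrt 2 : ℝ) : ℂ)⁻¹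
      else 0 := by
  simp only [qgU, fin_add_one n t ht]
  rw [if_pos (by simpa using ht), if_neg (by simpa using not_not_intro hmem),
    if_pos (by simpa using hmin)]

lemma qg_col_C (n : ℕ) (S : Finset ℕ) (η : ℝ) (t : ℕ) (ht : t < n) (hmem : t + 1 ∈ S)
    (hmin : t + 1 ≠ sInf (S : Set ℕ)) (k l : Bool) (r : Fin (n+1) × Bool × Bool) :
    qgU n S η r (⟨t, by omega⟩, k, l) =
      if r = ((⟨t+1, by omega⟩ : Fin (n+1)), xor k l, k) then ((Real.sqrt 2 : ℝ) : ℂ)⁻¹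
      else if r = ((⟨t+1, by omega⟩ : Fin (n+1)), !(xor k l), k) then Complex.I * ((Real.sqrt 2 : ℝ) : ℂ)⁻¹
      else 0 := by
  simp only [qgU, fin_add_one n t ht]
  simp [ht, hmem, hmin]

lemma qg_col_last (n : ℕ) (S : Finset ℕ) (η : ℝ) (k l : Bool) (r : Fin (n+1) × Bool × Bool) :
    qgU n S η r (⟨n, by omega⟩, k, l) =
      if r = ((⟨0, by omega⟩ : Fin (n+1)), k, l) then ((Real.sqrt (1 - η) : ℝ) : ℂ)
      else if r = ((⟨0, by omega⟩ : Fin (n+1)), !k, l) then Complex.I * ((Real.sqrt η : ℝ) : ℂ)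
      else 0 := by
  simp only [qgU, fin_last_add_one n]
  simp

lemma qg_meas_notS (n : ℕ) (S : Finset ℕ) (t : ℕ) (ht : t + 1 ≤ n) (hmem : t + 1 ∉ S)
    (k l : Bool) :
    qgMeas n S ((⟨t+1, by omega⟩ : Fin (n+1)), k, l) = l := by
  simp [qgMeas, hmem]

lemma qg_meas_min (n : ℕ) (S : Finset ℕ) (t : ℕ) (ht : t + 1 ≤ n) (hmem : t + 1 ∈ S)
    (hmin : t + 1 = sInf (S : Set ℕ)) (k l : Bool) :
    qgMeas n S ((⟨t+1, by omega⟩ : Fin (n+1)), k, l) = k := by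
  simp only [qgMeas]
  rw [if_neg (by simp [hmem]), if_neg (by simp [← hmin])]

lemma qg_meas_S (n : ℕ) (S : Finset ℕ) (t : ℕ) (ht : t + 1 ≤ n) (hmem : t + 1 ∈ S)
    (hmin : t + 1 ≠ sInf (S : Set ℕ)) (k l : Bool) :
    qgMeas n S ((⟨t+1, by omega⟩ : Fin (n+1)), k, l) = xor k l := by
  simp [qgMeas, hmem, hmin]

lemma qg_meas_zero (n : ℕ) (S : Finset ℕ) (h0 : 0 ∉ S) (k l : Bool) :
    qgMeas n S ((⟨0, by omega⟩ : Fin (n+1)), k, l) = k := by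
  simp [qgMeas, h0]

lemma normSq_half (c : ℂ) :
    Complex.normSq (c * ((Real.sqrt 2 : ℝ) : ℂ)⁻¹) = Complex.normSq c * (1/2) := by
  rw [Complex.normSq_mul, map_inv₀, Complex.normSq_ofReal,
    Real.mul_self_sqrt (by norm_num : (0:ℝ) ≤ 2)]
  norm_num

lemma normSq_half' (c : ℂ) :
    Complex.normSq (c * (Complex.I * ((Real.sqrt 2 : ℝ) : ℂ)⁻¹)) = Complex.normSq c * (1/2) := by
  rw [Complex.normSq_mul, Complex.normSq_mul, Complex.normSq_I, map_inv₀,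
    Complex.normSq_ofReal, Real.mul_self_sqrt (by norm_num : (0:ℝ) ≤ 2)]
  norm_num

lemma normSq_sqrt (c : ℂ) (a : ℝ) (ha : 0 ≤ a) :
    Complex.normSq (c * ((Real.sqrt a : ℝ) : ℂ)) = Complex.normSq c * a := by
  rw [Complex.normSq_mul, Complex.normSq_ofReal, Real.mul_self_sqrt ha]

lemma normSq_I_sqrt (c : ℂ) (a : ℝ) (ha : 0 ≤ a) :
    Complex.normSq (c * (Complex.I * ((Real.sqrt a : ℝ) : ℂ))) = Complex.normSq c * a := by
  rw [Complex.normSq_mul, Complex.normSq_mul, Complex.normSq_I,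
    Complex.normSq_ofReal, Real.mul_self_sqrt ha]
  ring


lemma bne1 {v a : Bool} (h : ¬v = a) : ¬a = v := fun h' => h h'.symm
lemma bne2 {a v : Bool} (h : ¬v = a) : (!a) = v :=
  (by decide : ∀ a v : Bool, ¬v = a → (!a) = v) a v h
lemma bne3 {a v : Bool} (h : v = a) : ¬(!a) = v :=
  (by decide : ∀ a v : Bool, v = a → ¬(!a) = v) a v h
lemma bB1 {k v : Bool} (h1 : k = false) (h2 : v = k) : k = (v ^^ k) :=
  (by decide : ∀ k v : Bool, k = false → v = k → k = (v ^^ k)) k v h1 h2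
lemma bB2 {k v : Bool} (h1 : k = false) (h2 : ¬v = k) : (!k) = (v ^^ k) :=
  (by decide : ∀ k v : Bool, k = false → ¬v = k → (!k) = (v ^^ k)) k v h1 h2
lemma bC1 {k l v : Bool} (h : v = l) : (k ^^ l) = (v ^^ k) :=
  (by decide : ∀ k l v : Bool, v = l → (k ^^ l) = (v ^^ k)) k l v h
lemma bC2 {k l v : Bool} (h : ¬v = l) : (!(k ^^ l)) = (v ^^ k) :=
  (by decide : ∀ k l v : Bool, ¬v = l → (!(k ^^ l)) = (v ^^ k)) k l v h
lemma bm1 {k l v : Bool} (h : v = l) : ((k ^^ l) ^^ k) = v :=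
  (by decide : ∀ k l v : Bool, v = l → ((k ^^ l) ^^ k) = v) k l v h
lemma bm2 {k l v : Bool} (h : v = l) : ¬((!(k ^^ l)) ^^ k) = v :=
  (by decide : ∀ k l v : Bool, v = l → ¬((!(k ^^ l)) ^^ k) = v) k l v h
lemma bm3 {k l v : Bool} (h : ¬v = l) : ¬((k ^^ l) ^^ k) = v :=
  (by decide : ∀ k l v : Bool, ¬v = l → ¬((k ^^ l) ^^ k) = v) k l v h
lemma bm4 {k l v : Bool} (h : ¬v = l) : ((!(k ^^ l)) ^^ k) = v :=
  (by decide : ∀ k l v : Bool, ¬v = l → ((!(k ^^ l)) ^^ k) = v) k l v h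

open Classical in
/-- The `(n+1)`-symbol output distribution of the noisy-parity quantum generator, started at
basis state `(0,0,0)`, is exactly the noisy parity distribution: the probability
`‖M_{x_{n+1}} U ⋯ M_{x_1} U ψ₀‖²` of the output string `x₁,…,x_{n+1}` equals `(1-η)/2^n`
when `x_{n+1} = ⊕_{i∈S} x_i`, and `η/2^n` otherwise. -/
theorem stmt19 (n : ℕ) (hn : 1 ≤ n) (S : Finset ℕ) (hS : S.Nonempty)
    (hSsub : S ⊆ Finset.Icc 1 n) (η : ℝ) (hη : 0 < η) (hη' : η < 1 / 2)
    (x : ℕ → Bool) (φ : ℕ → (Fin (n + 1) × Bool × Bool → ℂ))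
    (hφ0 : φ 0 = fun i => if i = (0, false, false) then 1 else 0)
    (hφ : ∀ t, φ (t + 1) = qgProj n S (x (t + 1)) ((qgU n S η).mulVec (φ t))) :
    ∑ i, Complex.normSq (φ (n + 1) i) =
      (if x (n + 1) = decide (Odd ((S.filter fun i => x i = true).card))
        then 1 - η else η) / 2 ^ n := by
  have hpos : ∀ i ∈ S, 1 ≤ i ∧ i ≤ n := by
    intro i hi
    simpa [Finset.mem_Icc] using hSsub hi
  have h0S : (0 : ℕ) ∉ S := fun h => by simpa using (hpos 0 h).1
  have key : ∀ t, ∀ ht : t ≤ n, ∃ (k l : Bool) (c : ℂ),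
      φ t = (fun i => if i = ((⟨t, by omega⟩ : Fin (n+1)), k, l) then c else 0) ∧
      Complex.normSq c = (1/2 : ℝ)^t ∧
      k = decide (Odd ((S.filter fun i => i ≤ t ∧ x i = true).card)) := by
    intro t
    induction t with
    | zero =>
      intro _
      refine ⟨false, false, 1, ?_, by simp, ?_⟩
      · rw [hφ0, show ((0 : Fin (n+1)), false, false) = ((⟨0, by omega⟩ : Fin (n+1)), false, false)
          from by rw [Prod.mk.injEq]; exact ⟨Fin.ext (by simp), rfl⟩]
      · rw [parity_vanish S x 0 (fun i hi => (hpos i hi).1)]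
    | succ t ih =>
      intro ht
      obtain ⟨k, l, c, hphi, hc, hk⟩ := ih (by omega)
      have htn : t < n := by omega
      rw [hφ t, hphi]
      by_cases hmem : t + 1 ∈ S
      · by_cases hmin : t + 1 = sInf (S : Set ℕ)
        · -- first element of S
          have hPt : k = false := by
            rw [hk, parity_vanish S x t (fun i hi => by
              have := Nat.sInf_le (show i ∈ (S : Set ℕ) from hi); omega)]
          by_cases hx : x (t+1) = k
          · refine ⟨k, l, c * ((Real.sqrt 2 : ℝ) : ℂ)⁻¹, ?_, ?_, ?_⟩
            · exact qg_proj_ind n S η (x (t+1)) _ _ _ _ _ c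
                (qg_col_B n S η t htn hmem hmin k l) (by simp)
                (by rw [qg_meas_min n S t (by omega) hmem hmin]; exact hx.symm)
                (by rw [qg_meas_min n S t (by omega) hmem hmin]; exact bne3 hx)
            · rw [normSq_half, hc, pow_succ]
            · rw [parity_step, ← hk]
              simp only [hmem, decide_true, Bool.true_and]
              exact bB1 hPt hx
          · refine ⟨!k, l, c * (Complex.I * ((Real.sqrt 2 : ℝ) : ℂ)⁻¹), ?_, ?_, ?_⟩
            · exact qg_proj_ind' n S η (x (t+1)) _ _ _ _ _ c
                (qg_col_B n S η t htn hmem hmin k l) (by simp)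
                (by rw [qg_meas_min n S t (by omega) hmem hmin]; exact bne1 hx)
                (by rw [qg_meas_min n S t (by omega) hmem hmin]; exact bne2 hx)
            · rw [normSq_half', hc, pow_succ]
            · rw [parity_step, ← hk]
              simp only [hmem, decide_true, Bool.true_and]
              exact bB2 hPt hx
        · -- later element of S
          by_cases hx : x (t+1) = l
          · refine ⟨xor k l, k, c * ((Real.sqrt 2 : ℝ) : ℂ)⁻¹, ?_, ?_, ?_⟩
            · exact qg_proj_ind n S η (x (t+1)) _ _ _ _ _ c
                (qg_col_C n S η t htn hmem hmin k l) (by simp)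
                (by rw [qg_meas_S n S t (by omega) hmem hmin]; exact bm1 hx)
                (by rw [qg_meas_S n S t (by omega) hmem hmin]; exact bm2 hx)
            · rw [normSq_half, hc, pow_succ]
            · rw [parity_step, ← hk]
              simp only [hmem, decide_true, Bool.true_and]
              exact bC1 hx
          · refine ⟨!(xor k l), k, c * (Complex.I * ((Real.sqrt 2 : ℝ) : ℂ)⁻¹), ?_, ?_, ?_⟩
            · exact qg_proj_ind' n S η (x (t+1)) _ _ _ _ _ c
                (qg_col_C n S η t htn hmem hmin k l) (by simp)
                (by rw [qg_meas_S n S t (by omega) hmem hmin]; exact bm3 hx)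
                (by rw [qg_meas_S n S t (by omega) hmem hmin]; exact bm4 hx)
            · rw [normSq_half', hc, pow_succ]
            · rw [parity_step, ← hk]
              simp only [hmem, decide_true, Bool.true_and]
              exact bC2 hx
      · -- not in S
        by_cases hx : x (t+1) = l
        · refine ⟨k, l, c * ((Real.sqrt 2 : ℝ) : ℂ)⁻¹, ?_, ?_, ?_⟩
          · exact qg_proj_ind n S η (x (t+1)) _ _ _ _ _ c
              (qg_col_A n S η t htn hmem k l) (by simp)
              (by rw [qg_meas_notS n S t (by omega) hmem]; exact hx.symm)
              (by rw [qg_meas_notS n S t (by omega) hmem]; exact bne3 hx)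
          · rw [normSq_half, hc, pow_succ]
          · rw [parity_step, ← hk]
            simp only [hmem, decide_false, Bool.false_and, Bool.false_xor]
        · refine ⟨k, !l, c * (Complex.I * ((Real.sqrt 2 : ℝ) : ℂ)⁻¹), ?_, ?_, ?_⟩
          · exact qg_proj_ind' n S η (x (t+1)) _ _ _ _ _ c
              (qg_col_A n S η t htn hmem k l) (by simp)
              (by rw [qg_meas_notS n S t (by omega) hmem]; exact bne1 hx)
              (by rw [qg_meas_notS n S t (by omega) hmem]; exact bne2 hx)
          · rw [normSq_half', hc, pow_succ]
          · rw [parity_step, ← hk]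
            simp only [hmem, decide_false, Bool.false_and, Bool.false_xor]
  -- final step
  obtain ⟨k, l, c, hphi, hc, hk⟩ := key n le_rfl
  have hfilter : (S.filter fun i => i ≤ n ∧ x i = true) = S.filter fun i => x i = true := by
    ext a
    simp only [Finset.mem_filter]
    constructor
    · rintro ⟨h1, _, h3⟩; exact ⟨h1, h3⟩
    · rintro ⟨h1, h3⟩; exact ⟨h1, (hpos a h1).2, h3⟩
  have hkx : decide (Odd ((S.filter fun i => x i = true).card)) = k := by
    rw [← hfilter]; exact hk.symm
  rw [hφ n, hphi, hkx]
  by_cases hx : x (n+1) = k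
  · rw [qg_proj_ind n S η (x (n+1)) _ _ _ _ _ c
      (qg_col_last n S η k l) (by simp)
      (by rw [qg_meas_zero n S h0S]; exact hx.symm)
      (by rw [qg_meas_zero n S h0S]; exact bne3 hx),
      sum_normSq_ind, normSq_sqrt c (1 - η) (by linarith), hc, if_pos hx]
    rw [one_div, inv_pow]
    ring
  · rw [qg_proj_ind' n S η (x (n+1)) _ _ _ _ _ c
      (qg_col_last n S η k l) (by simp)
      (by rw [qg_meas_zero n S h0S]; exact bne1 hx)
      (by rw [qg_meas_zero n S h0S]; exact bne2 hx),
      sum_normSq_ind, normSq_I_sqrt c η hη.le, hc, if_neg hx]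
    rw [one_div, inv_pow]
    ring
end
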